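/- Let G be a composite graph formed from disjoint connected subgraphs G_1,...,G_n joined through bridge nodes l_1,...,l_n via a connected backbone graph B. Then the effective resistance of G satisfies Ω_G = Σ_{i=1}^n Ω_i + Σ_{i=1}^n Σ_{j=i+1}^n n_i n_j r(l_i, l_j) + Σ_{i=1}^n (N − n_i) C_i(l_i), where Ω_i is the effective resistance of G_i and r(l_i, l_j) is the resistance distance between bridge nodes in G. -/

import Mathlib

open scoped Classical
open Matrix

noncomputable section

/-- The four Moore–Penrose conditions for `B` to be the pseudoinverse of `A`. -/
def IsMoorePenroseInv {α : Type*} [Fintype α] (A B : Matrix α α ℝ) : Prop :=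
  A * B * A = A ∧ B * A * B = B ∧ (A * B)ᵀ = A * B ∧ (B * A)ᵀ = B * A

/-- The Moore–Penrose pseudoinverse of a real square matrix (it exists and is
unique; we extract it by choice). -/
noncomputable def pinv {α : Type*} [Fintype α] (A : Matrix α α ℝ) : Matrix α α ℝ :=
  if h : ∃ B, IsMoorePenroseInv A B then h.choose else 0

/-- The (real) Laplacian matrix of a simple graph. -/
noncomputable def lap {α : Type*} [Fintype α] (H : SimpleGraph α) : Matrix α α ℝ :=
  letI := Classical.decEq α
  letI : DecidableRel H.Adj := Classical.decRel _
  H.lapMatrix ℝ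

/-- The standard basis (indicator) vector `e_u`. -/
noncomputable def evec {α : Type*} [Fintype α] (u : α) : α → ℝ :=
  fun w => if w = u then 1 else 0

/-- Resistance distance `r(u,v) = (e_u - e_v)ᵀ L† (e_u - e_v)`. -/
noncomputable def resistance {α : Type*} [Fintype α] (H : SimpleGraph α) (u v : α) : ℝ :=
  (evec u - evec v) ⬝ᵥ (pinv (lap H)).mulVec (evec u - evec v)

/-- Effective resistance `Ω_H = Σ_{u<v} r(u,v) = (1/2) Σ_{u,v} r(u,v)`. -/
noncomputable def effRes {α : Type*} [Fintype α] (H : SimpleGraph α) : ℝ :=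
  (1 / 2) * ∑ u : α, ∑ v : α, resistance H u v

/-- Network coherence `H_C(H) = Ω_H / (2 |V_H|)`. -/
noncomputable def coherence {α : Type*} [Fintype α] (H : SimpleGraph α) : ℝ :=
  effRes H / (2 * Fintype.card α)

/-- Resistance centrality `C(v) = Σ_{u ≠ v} r(u,v)`. -/
noncomputable def rcentrality {α : Type*} [Fintype α] (H : SimpleGraph α) (v : α) : ℝ :=
  ∑ u ∈ Finset.univ.filter (· ≠ v), resistance H u v

section Aux
variable {α : Type*} [Fintype α]

lemma lap_eq (H : SimpleGraph α) [DecidableEq α] [DecidableRel H.Adj] :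
    lap H = H.lapMatrix ℝ := by
  unfold lap
  congr! <;> exact Subsingleton.elim _ _

lemma lap_symm (H : SimpleGraph α) : (lap H)ᵀ = lap H := by
  classical
  rw [lap_eq]
  exact H.isSymm_lapMatrix (R := ℝ)

lemma lap_mulVec (H : SimpleGraph α) (f : α → ℝ) (x : α) :
    (lap H *ᵥ f) x = ∑ y, if H.Adj x y then f x - f y else 0 := by
  classical
  rw [lap_eq, SimpleGraph.lapMatrix_mulVec_apply]
  rw [show (∑ y, if H.Adj x y then f x - f y else 0)
      = ∑ y ∈ H.neighborFinset x, (f x - f y) by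
    rw [SimpleGraph.neighborFinset_eq_filter, Finset.sum_filter]]
  rw [Finset.sum_sub_distrib, Finset.sum_const, nsmul_eq_mul]
  rfl

lemma lap_mulVec_one (H : SimpleGraph α) : lap H *ᵥ (fun _ => (1:ℝ)) = 0 := by
  funext x
  rw [lap_mulVec]
  simp

lemma sum_evec (u : α) : ∑ w, evec u w = 1 := by
  simp [evec]

lemma dot_evec_sub (u v : α) (y : α → ℝ) : (evec u - evec v) ⬝ᵥ y = y u - y v := by
  simp [dotProduct, evec, sub_mul, Finset.sum_sub_distrib, Finset.sum_ite_eq']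

lemma sum_evec_sub (u v : α) : ∑ w, (evec u - evec v) w = 0 := by
  simp [Finset.sum_sub_distrib, sum_evec]

lemma resistance_self (H : SimpleGraph α) (v : α) : resistance H v v = 0 := by
  simp [resistance]

lemma resistance_comm (H : SimpleGraph α) (u v : α) :
    resistance H u v = resistance H v u := by
  unfold resistance
  rw [show evec v - evec u = -(evec u - evec v) by ring]
  rw [mulVec_neg, dotProduct_neg, neg_dotProduct, neg_neg]

end Aux

section Conn
variable {α : Type*} [Fintype α] {H : SimpleGraph α}

/-- Kernel of the Laplacian of a connected graph: only constants. -/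
lemma lap_ker (hH : H.Connected) {f : α → ℝ} (hf : lap H *ᵥ f = 0) (a b : α) :
    f a = f b := by
  classical
  rw [lap_eq] at hf
  have := (SimpleGraph.lapMatrix_mulVec_eq_zero_iff_forall_reachable (G := H)).mp
    hf
  exact this a b (hH.preconnected a b)

/-- The all-`1/n` matrix. -/
private def Jm (α : Type*) [Fintype α] : Matrix α α ℝ :=
  Matrix.of fun _ _ => (Fintype.card α : ℝ)⁻¹

lemma exists_pinv (hH : H.Connected) : ∃ p, IsMoorePenroseInv (lap H) p := by
  classical
  have hne : Nonempty α := hH.nonempty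
  have hcard : (0:ℝ) < (Fintype.card α : ℝ) := by
    exact_mod_cast Fintype.card_pos
  set c : ℝ := (Fintype.card α : ℝ)⁻¹ with hc
  have hcn : (Fintype.card α : ℝ) * c = 1 := mul_inv_cancel₀ (ne_of_gt hcard)
  set L := lap H with hL
  set J := Jm α with hJ
  have hJapp : ∀ a b, J a b = c := fun a b => rfl
  -- row sums of L are zero
  have hrow : ∀ a, ∑ k, L a k = 0 := by
    intro a
    have := congrFun (lap_mulVec_one H) a
    simpa [Matrix.mulVec, dotProduct] using this
  have hcol : ∀ b, ∑ k, L k b = 0 := by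
    intro b
    have : ∀ k, L k b = L b k := fun k => by
      have h2 := congrFun (congrFun (lap_symm H) b) k
      rw [Matrix.transpose_apply] at h2
      rw [hL]
      exact h2
    simp_rw [this]
    exact hrow b
  have hJJ : J * J = J := by
    ext a b
    simp only [Matrix.mul_apply, hJapp, Finset.sum_const, Finset.card_univ, nsmul_eq_mul]
    rw [← mul_assoc, hcn, one_mul]
  have hLJ : L * J = 0 := by
    ext a b
    simp only [Matrix.mul_apply, hJapp, Matrix.zero_apply, ← Finset.sum_mul, hrow, zero_mul]
  have hJL : J * L = 0 := by
    ext a b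
    simp only [Matrix.mul_apply, hJapp, Matrix.zero_apply, ← Finset.mul_sum, hcol, mul_zero]
  set M := L + J with hM
  -- M is invertible
  have hdet : IsUnit M.det := by
    by_contra hdet
    have : M.det = 0 := by
      rcases eq_or_ne M.det 0 with h | h
      · exact h
      · exact absurd (Ne.isUnit h) hdet
    obtain ⟨v, hv0, hv⟩ := (Matrix.exists_mulVec_eq_zero_iff.mpr this)
    -- quadratic form of M at v is 0
    have hq : v ⬝ᵥ (L *ᵥ v) + v ⬝ᵥ (J *ᵥ v) = 0 := by
      have : v ⬝ᵥ (M *ᵥ v) = 0 := by rw [hv, dotProduct_zero]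
      rw [← this, hM, Matrix.add_mulVec, dotProduct_add]
    have hJv : v ⬝ᵥ (J *ᵥ v) = c * (∑ k, v k)^2 := by
      have hJvec : (J *ᵥ v) = fun _ => c * ∑ k, v k := by
        funext a
        simp [Matrix.mulVec, dotProduct, hJapp, Finset.mul_sum]
      rw [dotProduct, hJvec]
      dsimp only
      rw [← Finset.sum_mul]
      ring
    have hLv : 0 ≤ v ⬝ᵥ (L *ᵥ v) := by
      have hPSD := (SimpleGraph.posSemidef_lapMatrix ℝ H).dotProduct_mulVec_nonneg v
      rw [star_trivial] at hPSD
      rw [hL, lap_eq]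
      exact hPSD
    have hJv0 : 0 ≤ c * (∑ k, v k)^2 := by positivity
    have hLz : v ⬝ᵥ (L *ᵥ v) = 0 := by
      rw [hJv] at hq
      linarith
    have hSz : (∑ k, v k) = 0 := by
      rw [hJv, hLz, zero_add] at hq
      have hc0 : c ≠ 0 := by positivity
      have := mul_eq_zero.mp hq
      rcases this with h | h
      · exact absurd h hc0
      · exact pow_eq_zero_iff (n := 2) (by norm_num) |>.mp h
    have hq0 : Matrix.toLinearMap₂' ℝ (H.lapMatrix ℝ) v v = 0 := by
      rw [Matrix.toLinearMap₂'_apply', ← lap_eq, ← hL]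
      exact hLz
    have hconst := (SimpleGraph.lapMatrix_toLinearMap₂'_apply'_eq_zero_iff_forall_reachable
      H v).mp hq0
    apply hv0
    funext b
    have hvb : ∀ a, v a = v b := fun a => hconst a b (hH.preconnected a b)
    have : ∑ k, v k = (Fintype.card α : ℝ) * v b := by
      rw [Finset.sum_congr rfl (fun a _ => hvb a), Finset.sum_const, Finset.card_univ,
        nsmul_eq_mul]
    rw [this] at hSz
    have := mul_eq_zero.mp hSz
    rcases this with h | h
    · exact absurd h (ne_of_gt hcard)
    · exact h
  -- M is invertible; build the pseudoinverse
  have hMM : M * M⁻¹ = 1 := Matrix.mul_nonsing_inv M hdet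
  have hM'M : M⁻¹ * M = 1 := Matrix.nonsing_inv_mul M hdet
  have hJM : J * M = J := by rw [hM, Matrix.mul_add, hJL, hJJ, zero_add]
  have hMJ : M * J = J := by rw [hM, Matrix.add_mul, hLJ, hJJ, zero_add]
  have hJMi : J * M⁻¹ = J := by
    calc J * M⁻¹ = (J * M) * M⁻¹ := by rw [hJM]
    _ = J * (M * M⁻¹) := by rw [mul_assoc]
    _ = J := by rw [hMM, mul_one]
  have hMiJ : M⁻¹ * J = J := by
    calc M⁻¹ * J = M⁻¹ * (M * J) := by rw [hMJ]
    _ = (M⁻¹ * M) * J := by rw [mul_assoc]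
    _ = J := by rw [hM'M, one_mul]
  have hLdec : L = M - J := by rw [hM, add_sub_cancel_right]
  have hJT : Jᵀ = J := by ext a b; rfl
  have hLp : L * (M⁻¹ - J) = 1 - J := by
    rw [hLdec, Matrix.sub_mul, Matrix.mul_sub, Matrix.mul_sub, hMM, hMJ, hJMi, hJJ, sub_self,
      sub_zero]
  have hpL : (M⁻¹ - J) * L = 1 - J := by
    rw [hLdec, Matrix.mul_sub, Matrix.sub_mul, Matrix.sub_mul, hM'M, hMiJ, hJM, hJJ, sub_self,
      sub_zero]
  refine ⟨M⁻¹ - J, ?_, ?_, ?_, ?_⟩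
  · rw [hLp, Matrix.sub_mul, Matrix.one_mul, hJL, sub_zero]
  · rw [hpL, Matrix.sub_mul, Matrix.one_mul, Matrix.mul_sub, hJMi, hJJ, sub_self, sub_zero]
  · rw [hLp, Matrix.transpose_sub, Matrix.transpose_one, hJT]
  · rw [hpL, Matrix.transpose_sub, Matrix.transpose_one, hJT]

lemma pinv_isMP (hH : H.Connected) : IsMoorePenroseInv (lap H) (pinv (lap H)) := by
  rw [pinv, dif_pos (exists_pinv hH)]
  exact (exists_pinv hH).choose_spec

/-- For `x ⊥ 1`, `L L† x = x` on a connected graph. -/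
lemma lap_pinv_mulVec (hH : H.Connected) {x : α → ℝ} (hx : ∑ a, x a = 0) :
    lap H *ᵥ (pinv (lap H) *ᵥ x) = x := by
  classical
  obtain ⟨h1, h2, h3, h4⟩ := pinv_isMP hH
  set L := lap H with hL
  set p := pinv (lap H) with hp
  set P := L * p with hP
  have hLsymm : Lᵀ = L := by rw [hL]; exact lap_symm H
  have hL1 : L *ᵥ (fun _ => (1:ℝ)) = 0 := by rw [hL]; exact lap_mulVec_one H
  -- P is symmetric
  have hPsymm : Pᵀ = P := h3
  -- L * P = L
  have hLP : L * P = L := by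
    have e1 : (L * P)ᵀ = L := by
      rw [Matrix.transpose_mul, hPsymm, hLsymm, h1]
    calc L * P = ((L * P)ᵀ)ᵀ := (Matrix.transpose_transpose _).symm
    _ = Lᵀ := by rw [e1]
    _ = L := hLsymm
  -- P *ᵥ 1 = 0
  have hP1 : P *ᵥ (fun _ => (1:ℝ)) = 0 := by
    rw [← hPsymm, hP, Matrix.transpose_mul, ← Matrix.mulVec_mulVec, hLsymm, hL1,
      Matrix.mulVec_zero]
  -- the residue is constant
  have hker : ∀ a b, (x - P *ᵥ x) a = (x - P *ᵥ x) b := by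
    apply lap_ker hH
    rw [← hL, Matrix.mulVec_sub, Matrix.mulVec_mulVec, hLP]
    simp
  -- the residue has zero sum
  have hsum : ∑ a, (x - P *ᵥ x) a = 0 := by
    have hPx : ∑ a, (P *ᵥ x) a = 0 := by
      have e2 : ∑ a, (P *ᵥ x) a = (fun _ => (1:ℝ)) ⬝ᵥ (P *ᵥ x) := by
        simp [dotProduct]
      rw [e2, Matrix.dotProduct_mulVec, ← Matrix.mulVec_transpose, hPsymm, hP1]
      simp [dotProduct]
    simp [Finset.sum_sub_distrib, hx, hPx]
  -- hence residue = 0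
  have hres : ∀ a, (x - P *ᵥ x) a = 0 := by
    intro a
    haveI := hH.nonempty
    have hcardpos : (0:ℝ) < (Fintype.card α : ℝ) := by exact_mod_cast Fintype.card_pos
    have e3 : ∑ k, (x - P *ᵥ x) k = (Fintype.card α : ℝ) * (x - P *ᵥ x) a := by
      rw [Finset.sum_congr rfl (fun k _ => hker k a), Finset.sum_const, Finset.card_univ,
        nsmul_eq_mul]
    rw [hsum] at e3
    rcases mul_eq_zero.mp e3.symm with h | h
    · exact absurd h (ne_of_gt hcardpos)
    · exact h
  have e4 : x - P *ᵥ x = 0 := funext hres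
  have hPxx : P *ᵥ x = x := (sub_eq_zero.mp e4).symm
  rw [Matrix.mulVec_mulVec, ← hP]
  exact hPxx

/-- Resistance from any potential solution. -/
lemma resistance_eq_sub (hH : H.Connected) {u v : α} {y : α → ℝ}
    (hy : lap H *ᵥ y = evec u - evec v) :
    resistance H u v = y u - y v := by
  classical
  set x : α → ℝ := evec u - evec v with hxdef
  have hx : ∑ a, x a = 0 := sum_evec_sub u v
  set q := pinv (lap H) *ᵥ x with hq
  have hLq : lap H *ᵥ q = x := lap_pinv_mulVec hH hx
  have hker : ∀ a b, (y - q) a = (y - q) b := by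
    apply lap_ker hH
    rw [Matrix.mulVec_sub, hy, hLq, sub_self]
  have hdot : x ⬝ᵥ (y - q) = 0 := by
    obtain ⟨b⟩ := hH.nonempty
    have : x ⬝ᵥ (y - q) = (∑ a, x a) * (y - q) b := by
      rw [dotProduct, Finset.sum_mul]
      exact Finset.sum_congr rfl (fun a _ => by rw [hker a b])
    rw [this, hx, zero_mul]
  have hxy : x ⬝ᵥ y = x ⬝ᵥ q := by
    have := hdot
    rw [dotProduct_sub, sub_eq_zero] at this
    exact this
  have : resistance H u v = x ⬝ᵥ q := rfl
  rw [this, ← hxy, hxdef, dot_evec_sub]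

lemma exists_sol (hH : H.Connected) (u v : α) :
    ∃ y, lap H *ᵥ y = evec u - evec v :=
  ⟨pinv (lap H) *ᵥ (evec u - evec v), lap_pinv_mulVec hH (sum_evec_sub u v)⟩

end Conn

/-- The composite graph built from disjoint subgraphs `G i` with bridge nodes `l i`,
connected according to the backbone graph `B` on the indices. -/
def composite {n : ℕ} (V : Fin n → Type*) (G : ∀ i, SimpleGraph (V i))
    (l : ∀ i, V i) (B : SimpleGraph (Fin n)) : SimpleGraph (Σ i, V i) where
  Adj x y := (∃ h : x.1 = y.1, (G y.1).Adj (h ▸ x.2) y.2) ∨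
    (B.Adj x.1 y.1 ∧ x.2 = l x.1 ∧ y.2 = l y.1)
  symm := ⟨by
    rintro ⟨i, u⟩ ⟨j, v⟩ (⟨h, hadj⟩ | ⟨hB, hu, hv⟩)
    · dsimp only at h
      subst h
      exact Or.inl ⟨rfl, hadj.symm⟩
    · exact Or.inr ⟨hB.symm, hv, hu⟩⟩
  loopless := ⟨by
    rintro ⟨i, u⟩ (⟨h, hadj⟩ | ⟨hB, _, _⟩)
    · exact (G i).irrefl hadj
    · exact B.irrefl hB⟩

section Comp
variable {n : ℕ} {V : Fin n → Type*} [∀ i, Fintype (V i)]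
  {G : ∀ i, SimpleGraph (V i)} {l : ∀ i, V i} {B : SimpleGraph (Fin n)}

lemma comp_adj_same {k : Fin n} {w z : V k} :
    (composite V G l B).Adj ⟨k, w⟩ ⟨k, z⟩ ↔ (G k).Adj w z := by
  constructor
  · rintro (⟨h, ha⟩ | ⟨hb, -, -⟩)
    · have : h = rfl := Subsingleton.elim _ _
      subst this
      exact ha
    · exact absurd hb (B.irrefl (v := k))
  · exact fun h => Or.inl ⟨rfl, h⟩

lemma comp_adj_ne {k m : Fin n} (hkm : k ≠ m) {w : V k} {z : V m} :
    (composite V G l B).Adj ⟨k, w⟩ ⟨m, z⟩ ↔ (B.Adj k m ∧ w = l k ∧ z = l m) := by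
  constructor
  · rintro (⟨h, -⟩ | h)
    · exact absurd h hkm
    · exact h
  · exact Or.inr

lemma evec_sigma_same {i : Fin n} {u w : V i} :
    evec (⟨i, u⟩ : Σ k, V k) ⟨i, w⟩ = evec u w := by
  simp only [evec, Sigma.mk.inj_iff, heq_eq_eq, true_and]

lemma evec_sigma_ne {i k : Fin n} (h : k ≠ i) {u : V i} {w : V k} :
    evec (⟨i, u⟩ : Σ k, V k) ⟨k, w⟩ = 0 := by
  simp only [evec, Sigma.mk.inj_iff]
  rw [if_neg]
  rintro ⟨h1, -⟩
  exact h h1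

/-- The Laplacian of the composite graph applied to a potential. -/
lemma lap_comp_mulVec (F : (Σ k, V k) → ℝ) (k : Fin n) (w : V k) :
    (lap (composite V G l B) *ᵥ F) ⟨k, w⟩ =
      (∑ z : V k, if (G k).Adj w z then F ⟨k, w⟩ - F ⟨k, z⟩ else 0)
        + (if w = l k
            then ∑ m, if B.Adj k m then F ⟨k, l k⟩ - F ⟨m, l m⟩ else 0
            else 0) := by
  classical
  rw [lap_mulVec]
  rw [← Finset.univ_sigma_univ, Finset.sum_sigma]
  rw [← Finset.add_sum_erase _ _ (Finset.mem_univ k)]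
  congr 1
  · -- sum over own block: internal edges
    apply Finset.sum_congr rfl
    intro z _
    rw [comp_adj_same]
  · -- sum over other blocks: bridge edges
    have e1 : ∀ m ∈ Finset.univ.erase k,
        (∑ z : V m, if (composite V G l B).Adj ⟨k, w⟩ ⟨m, z⟩
            then F ⟨k, w⟩ - F ⟨m, z⟩ else 0)
          = if w = l k then (if B.Adj k m then F ⟨k, l k⟩ - F ⟨m, l m⟩ else 0) else 0 := by
      intro m hm
      have hkm : k ≠ m := fun h => (Finset.mem_erase.mp hm).1 h.symm
      have e2 : ∀ z : V m, (if (composite V G l B).Adj ⟨k, w⟩ ⟨m, z⟩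
          then F ⟨k, w⟩ - F ⟨m, z⟩ else 0)
          = if z = l m then (if B.Adj k m ∧ w = l k then F ⟨k, w⟩ - F ⟨m, z⟩ else 0)
            else 0 := by
        intro z
        rw [comp_adj_ne hkm]
        by_cases h1 : z = l m <;> by_cases h2 : B.Adj k m <;> by_cases h3 : w = l k <;>
          simp [h1, h2, h3]
      rw [Finset.sum_congr rfl (fun z _ => e2 z), Finset.sum_ite_eq' Finset.univ (l m)]
      simp only [Finset.mem_univ, if_true]
      by_cases h3 : w = l k
      · subst h3
        by_cases h2 : B.Adj k m <;> simp [h2]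
      · simp [h3]
    rw [Finset.sum_congr rfl e1]
    by_cases hw : w = l k
    · subst hw
      simp only [if_pos rfl]
      conv_rhs => rw [← Finset.sum_erase_add _ _ (Finset.mem_univ k)]
      simp [B.irrefl (v := k)]
    · simp [hw]

end Comp

section Comp2
variable {n : ℕ} {V : Fin n → Type*} [∀ i, Fintype (V i)]
  {G : ∀ i, SimpleGraph (V i)} {l : ∀ i, V i} {B : SimpleGraph (Fin n)}

/-- Extension of a subgraph potential to the composite graph. -/
def extPot (l : ∀ i, V i) (i : Fin n) (y : V i → ℝ) : (Σ k, V k) → ℝ :=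
  fun x => if h : x.1 = i then y (h ▸ x.2) else y (l i)

@[simp] lemma extPot_same {i : Fin n} (y : V i → ℝ) (w : V i) :
    extPot l i y ⟨i, w⟩ = y w := by
  simp [extPot]

lemma extPot_ne {i k : Fin n} (h : k ≠ i) (y : V i → ℝ) (w : V k) :
    extPot l i y ⟨k, w⟩ = y (l i) := by
  simp [extPot, h]

lemma extPot_bridge {i : Fin n} (y : V i → ℝ) (m : Fin n) :
    extPot l i y ⟨m, l m⟩ = y (l i) := by
  by_cases h : m = i
  · subst h
    simp [extPot]
  · exact extPot_ne h y (l m)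

lemma lap_extPot {i : Fin n} {u v : V i} {y : V i → ℝ}
    (hy : lap (G i) *ᵥ y = evec u - evec v) :
    lap (composite V G l B) *ᵥ extPot l i y
      = evec (⟨i, u⟩ : Σ k, V k) - evec ⟨i, v⟩ := by
  classical
  funext x
  obtain ⟨k, w⟩ := x
  rw [lap_comp_mulVec]
  have hbr : (if w = l k
      then ∑ m, if B.Adj k m then extPot l i y ⟨k, l k⟩ - extPot l i y ⟨m, l m⟩ else 0
      else 0) = 0 := by
    have : ∀ m, (if B.Adj k m
        then extPot l i y ⟨k, l k⟩ - extPot l i y ⟨m, l m⟩ else 0) = 0 := by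
      intro m
      rw [extPot_bridge, extPot_bridge, sub_self, ite_self]
    rw [Finset.sum_congr rfl (fun m _ => this m), Finset.sum_const_zero, ite_self]
  rw [hbr, add_zero]
  by_cases hk : k = i
  · subst hk
    have e1 : ∀ z : V k, extPot l k y ⟨k, z⟩ = y z := fun z => extPot_same y z
    simp only [e1]
    have e2 : (∑ z : V k, if (G k).Adj w z then y w - y z else 0)
        = (lap (G k) *ᵥ y) w := (lap_mulVec (G k) y w).symm
    rw [e2, hy]
    simp only [Pi.sub_apply, evec_sigma_same]
  · have e1 : ∀ z : V k, extPot l i y ⟨k, z⟩ = y (l i) := fun z => extPot_ne hk y z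
    simp only [e1, sub_self, ite_self]
    simp only [Pi.sub_apply, evec_sigma_ne hk, sub_zero]
    simp

/-- Extension of a backbone potential to the composite graph. -/
lemma lap_backPot {i j : Fin n} {z : Fin n → ℝ}
    (hz : lap B *ᵥ z = evec i - evec j) :
    lap (composite V G l B) *ᵥ (fun x => z x.1)
      = evec (⟨i, l i⟩ : Σ k, V k) - evec ⟨j, l j⟩ := by
  classical
  funext x
  obtain ⟨k, w⟩ := x
  rw [lap_comp_mulVec]
  have hint : (∑ s : V k, if (G k).Adj w s then z k - z k else 0) = 0 := by
    simp
  rw [hint, zero_add]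
  have e2 : (∑ m, if B.Adj k m then z k - z m else 0) = (lap B *ᵥ z) k :=
    (lap_mulVec B z k).symm
  rw [e2, hz]
  by_cases hw : w = l k
  · subst hw
    simp only [Pi.sub_apply]
    rw [if_pos trivial]
    congr 1
    · by_cases hk : k = i
      · subst hk
        simp [evec]
      · simp [evec, hk, Sigma.mk.inj_iff]
    · by_cases hk : k = j
      · subst hk
        simp [evec]
      · simp [evec, hk, Sigma.mk.inj_iff]
  · simp only [Pi.sub_apply]
    rw [if_neg hw]
    have h1 : evec (⟨i, l i⟩ : Σ k, V k) ⟨k, w⟩ = 0 := by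
      simp only [evec, Sigma.mk.inj_iff]
      rw [if_neg]
      rintro ⟨rfl, h2⟩
      exact hw (eq_of_heq h2)
    have h2 : evec (⟨j, l j⟩ : Σ k, V k) ⟨k, w⟩ = 0 := by
      simp only [evec, Sigma.mk.inj_iff]
      rw [if_neg]
      rintro ⟨rfl, h2⟩
      exact hw (eq_of_heq h2)
    rw [h1, h2, sub_self]



lemma comp_connected (hG : ∀ i, (G i).Connected) (hB : B.Connected) :
    (composite V G l B).Connected := by
  rw [SimpleGraph.connected_iff]
  constructor
  · rintro ⟨i, u⟩ ⟨j, v⟩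
    have r1 : (composite V G l B).Reachable ⟨i, u⟩ ⟨i, l i⟩ :=
      ((hG i).preconnected u (l i)).map
        ⟨fun w => (⟨i, w⟩ : Σ k, V k), fun h => Or.inl ⟨rfl, h⟩⟩
    have r2 : (composite V G l B).Reachable ⟨i, l i⟩ ⟨j, l j⟩ :=
      (hB.preconnected i j).map
        ⟨fun k => (⟨k, l k⟩ : Σ k, V k), fun h => Or.inr ⟨h, rfl, rfl⟩⟩
    have r3 : (composite V G l B).Reachable ⟨j, l j⟩ ⟨j, v⟩ :=
      ((hG j).preconnected (l j) v).map
        ⟨fun w => (⟨j, w⟩ : Σ k, V k), fun h => Or.inl ⟨rfl, h⟩⟩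
    exact (r1.trans r2).trans r3
  · have : Nonempty (Fin n) := hB.nonempty
    obtain ⟨i⟩ := this
    have : Nonempty (V i) := (hG i).nonempty
    obtain ⟨u⟩ := this
    exact ⟨⟨i, u⟩⟩

end Comp2

section Comp3
variable {n : ℕ} {V : Fin n → Type*} [∀ i, Fintype (V i)]
  {G : ∀ i, SimpleGraph (V i)} {l : ∀ i, V i} {B : SimpleGraph (Fin n)}
  (hG : ∀ i, (G i).Connected) (hB : B.Connected)

include hG hB

lemma resistance_comp_same (i : Fin n) (u v : V i) :
    resistance (composite V G l B) ⟨i, u⟩ ⟨i, v⟩ = resistance (G i) u v := by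
  obtain ⟨y, hy⟩ := exists_sol (hG i) u v
  have h1 := resistance_eq_sub (hG i) hy
  have h2 := resistance_eq_sub (comp_connected hG hB) (lap_extPot (l := l) (B := B) hy)
  rw [h1, h2, extPot_same, extPot_same]

lemma resistance_comp_bridge (i j : Fin n) {z : Fin n → ℝ}
    (hz : lap B *ᵥ z = evec i - evec j) :
    resistance (composite V G l B) ⟨i, l i⟩ ⟨j, l j⟩ = z i - z j :=
  resistance_eq_sub (comp_connected hG hB) (lap_backPot hz)

lemma resistance_comp_cross {i j : Fin n} (hij : i ≠ j) (u : V i) (v : V j) :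
    resistance (composite V G l B) ⟨i, u⟩ ⟨j, v⟩
      = resistance (G i) u (l i)
        + resistance (composite V G l B) ⟨i, l i⟩ ⟨j, l j⟩
        + resistance (G j) (l j) v := by
  obtain ⟨y₁, hy₁⟩ := exists_sol (hG i) u (l i)
  obtain ⟨z, hz⟩ := exists_sol hB i j
  obtain ⟨y₃, hy₃⟩ := exists_sol (hG j) (l j) v
  have hF : lap (composite V G l B) *ᵥ
        (extPot l i y₁ + (fun x => z x.1) + extPot l j y₃)
      = evec (⟨i, u⟩ : Σ k, V k) - evec ⟨j, v⟩ := by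
    rw [Matrix.mulVec_add, Matrix.mulVec_add, lap_extPot (B := B) hy₁, lap_backPot hz,
      lap_extPot (B := B) hy₃]
    abel
  have h0 := resistance_eq_sub (comp_connected hG hB) hF
  rw [h0, resistance_eq_sub (hG i) hy₁, resistance_eq_sub (hG j) hy₃,
    resistance_comp_bridge hG hB i j hz]
  simp only [Pi.add_apply, extPot_same, extPot_ne hij.symm, extPot_ne hij]
  ring

/-- Diagonal block sum. -/
lemma block_diag (i : Fin n) :
    (∑ u : V i, ∑ v : V i, resistance (composite V G l B) ⟨i, u⟩ ⟨i, v⟩)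
      = 2 * effRes (G i) := by
  rw [Finset.sum_congr rfl fun u _ => Finset.sum_congr rfl fun v _ =>
    resistance_comp_same hG hB i u v]
  rw [effRes]
  ring

/-- Off-diagonal block sum. -/
lemma block_cross {i j : Fin n} (hij : i ≠ j) :
    (∑ u : V i, ∑ v : V j, resistance (composite V G l B) ⟨i, u⟩ ⟨j, v⟩)
      = (Fintype.card (V j) : ℝ) * (∑ u : V i, resistance (G i) u (l i))
        + (Fintype.card (V i) : ℝ) * (Fintype.card (V j) : ℝ) *
            resistance (composite V G l B) ⟨i, l i⟩ ⟨j, l j⟩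
        + (Fintype.card (V i) : ℝ) * (∑ v : V j, resistance (G j) v (l j)) := by
  have hs : (∑ v : V j, resistance (G j) (l j) v)
      = ∑ v : V j, resistance (G j) v (l j) :=
    Finset.sum_congr rfl fun v _ => resistance_comm (G j) _ _
  rw [Finset.sum_congr rfl fun u _ => Finset.sum_congr rfl fun v _ =>
    resistance_comp_cross hG hB hij u v]
  rw [Finset.sum_congr rfl fun u (_ : u ∈ Finset.univ) => by
    rw [Finset.sum_add_distrib, Finset.sum_const, Finset.card_univ, nsmul_eq_mul, hs]]
  rw [Finset.sum_add_distrib, Finset.sum_const, Finset.card_univ, nsmul_eq_mul,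
    Finset.sum_congr rfl fun u (_ : u ∈ Finset.univ) =>
      mul_add ((Fintype.card (V j) : ℝ)) (resistance (G i) u (l i))
        (resistance (composite V G l B) ⟨i, l i⟩ ⟨j, l j⟩),
    Finset.sum_add_distrib, Finset.sum_const, Finset.card_univ, nsmul_eq_mul,
    ← Finset.mul_sum]
  ring

end Comp3

/-- Effective resistance of a composite graph in terms of the
effective resistances of the subgraphs, resistance distances between bridge
nodes (in the composite graph), and resistance centralities of the bridge
nodes (within their own subgraphs). -/
theorem effRes_composite
    {n : ℕ} (hn : 2 ≤ n)
    (V : Fin n → Type*) [∀ i, Fintype (V i)]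
    (G : ∀ i, SimpleGraph (V i)) (l : ∀ i, V i) (B : SimpleGraph (Fin n))
    (hG : ∀ i, (G i).Connected) (hB : B.Connected) :
    effRes (composite V G l B) =
      (∑ i, effRes (G i)) +
      (∑ i, ∑ j ∈ Finset.Ioi i,
         (Fintype.card (V i) : ℝ) * (Fintype.card (V j) : ℝ) *
           resistance (composite V G l B) ⟨i, l i⟩ ⟨j, l j⟩) +
      (∑ i, ((Fintype.card (Σ i, V i) : ℝ) - (Fintype.card (V i) : ℝ)) *
         rcentrality (G i) (l i)) := by
  classical
  -- resistance centrality is the full sum (the diagonal term vanishes)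
  have hrc : ∀ i, rcentrality (G i) (l i) = ∑ u : V i, resistance (G i) u (l i) :=
    fun i => Finset.sum_filter_of_ne
      (fun x _ hx he => hx (by rw [he, resistance_self]))
  have hN : (Fintype.card (Σ i, V i) : ℝ) = ∑ i, (Fintype.card (V i) : ℝ) := by
    push_cast [Fintype.card_sigma]
    rfl
  -- expand the double sum over the sigma type
  have h1 : ∀ (F : (Σ k, V k) → ℝ), ∑ x, F x = ∑ i, ∑ u : V i, F ⟨i, u⟩ := fun F => by
    rw [← Finset.univ_sigma_univ, Finset.sum_sigma]
  have expand : effRes (composite V G l B)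
      = (1/2) * ∑ i, ∑ j, ∑ u : V i, ∑ v : V j,
          resistance (composite V G l B) ⟨i, u⟩ ⟨j, v⟩ := by
    show (1/2) * ∑ x : (Σ k, V k), ∑ y : (Σ k, V k),
        resistance (composite V G l B) x y = _
    rw [h1 fun x => ∑ y : (Σ k, V k), resistance (composite V G l B) x y]
    congr 1
    refine Finset.sum_congr rfl fun i _ => ?_
    rw [Finset.sum_congr rfl fun u (_ : u ∈ Finset.univ) =>
      h1 fun y => resistance (composite V G l B) ⟨i, u⟩ y]
    exact Finset.sum_comm
  -- split each row into the diagonal block and the off-diagonal blocks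
  have step1 : ∀ i : Fin n,
      (∑ j, ∑ u : V i, ∑ v : V j, resistance (composite V G l B) ⟨i, u⟩ ⟨j, v⟩)
        = 2 * effRes (G i)
          + ((∑ j ∈ Finset.univ.erase i,
              (Fintype.card (V j) : ℝ) * (∑ u : V i, resistance (G i) u (l i)))
            + (∑ j ∈ Finset.univ.erase i,
              (Fintype.card (V i) : ℝ) * (Fintype.card (V j) : ℝ) *
                    resistance (composite V G l B) ⟨i, l i⟩ ⟨j, l j⟩)
            + (∑ j ∈ Finset.univ.erase i,
              (Fintype.card (V i) : ℝ) * (∑ v : V j, resistance (G j) v (l j)))) := by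
    intro i
    rw [← Finset.add_sum_erase _ _ (Finset.mem_univ i), block_diag hG hB i,
      Finset.sum_congr rfl (fun j hj =>
        block_cross hG hB (Ne.symm (Finset.mem_erase.mp hj).1)),
      Finset.sum_add_distrib, Finset.sum_add_distrib]
  -- the three off-diagonal pieces
  have hE1 : ∑ i, ∑ j ∈ Finset.univ.erase i,
        (Fintype.card (V j) : ℝ) * (∑ u : V i, resistance (G i) u (l i))
      = ∑ i, ((Fintype.card (Σ i, V i) : ℝ) - (Fintype.card (V i) : ℝ)) *
          (∑ u : V i, resistance (G i) u (l i)) := by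
    refine Finset.sum_congr rfl fun i _ => ?_
    rw [← Finset.sum_mul, Finset.sum_erase_eq_sub (Finset.mem_univ i), ← hN]
  have hE3 : ∑ i, ∑ j ∈ Finset.univ.erase i,
        (Fintype.card (V i) : ℝ) * (∑ v : V j, resistance (G j) v (l j))
      = ∑ i, ((Fintype.card (Σ i, V i) : ℝ) - (Fintype.card (V i) : ℝ)) *
          (∑ u : V i, resistance (G i) u (l i)) := by
    rw [Finset.sum_comm' (t' := Finset.univ) (s' := fun j => Finset.univ.erase j)
      (fun x y => by
        simp only [Finset.mem_univ, Finset.mem_erase, true_and, and_true]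
        exact ne_comm)]
    refine Finset.sum_congr rfl fun j _ => ?_
    rw [← Finset.sum_mul, Finset.sum_erase_eq_sub (Finset.mem_univ j), ← hN]
  have hE2 : ∑ i, ∑ j ∈ Finset.univ.erase i,
        (Fintype.card (V i) : ℝ) * (Fintype.card (V j) : ℝ) *
          resistance (composite V G l B) ⟨i, l i⟩ ⟨j, l j⟩
      = 2 * ∑ i, ∑ j ∈ Finset.Ioi i,
          (Fintype.card (V i) : ℝ) * (Fintype.card (V j) : ℝ) *
            resistance (composite V G l B) ⟨i, l i⟩ ⟨j, l j⟩ := by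
    have hsplit : ∀ i : Fin n, Finset.univ.erase i = Finset.Iio i ∪ Finset.Ioi i := by
      intro i
      ext j
      simp only [Finset.mem_erase, Finset.mem_univ, and_true, Finset.mem_union,
        Finset.mem_Iio, Finset.mem_Ioi]
      exact ne_iff_lt_or_gt
    have hdisj : ∀ i : Fin n, Disjoint (Finset.Iio i) (Finset.Ioi i) := fun i =>
      Finset.disjoint_left.mpr fun j hj hj' =>
        lt_asymm (Finset.mem_Iio.mp hj) (Finset.mem_Ioi.mp hj')
    rw [Finset.sum_congr rfl fun i (_ : i ∈ Finset.univ) => by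
      rw [hsplit i, Finset.sum_union (hdisj i)]]
    rw [Finset.sum_add_distrib]
    have hswap : ∑ i, ∑ j ∈ Finset.Iio i,
          (Fintype.card (V i) : ℝ) * (Fintype.card (V j) : ℝ) *
            resistance (composite V G l B) ⟨i, l i⟩ ⟨j, l j⟩
        = ∑ i, ∑ j ∈ Finset.Ioi i,
          (Fintype.card (V i) : ℝ) * (Fintype.card (V j) : ℝ) *
            resistance (composite V G l B) ⟨i, l i⟩ ⟨j, l j⟩ := by
      rw [Finset.sum_comm' (t' := Finset.univ) (s' := fun j => Finset.Ioi j)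
        (fun x y => by simp [Finset.mem_Iio, Finset.mem_Ioi])]
      refine Finset.sum_congr rfl fun j _ => Finset.sum_congr rfl fun i _ => ?_
      rw [resistance_comm]
      ring
    rw [hswap]
    ring
  -- put everything together
  rw [expand, Finset.sum_congr rfl fun i _ => step1 i]
  rw [Finset.sum_add_distrib, Finset.sum_add_distrib, Finset.sum_add_distrib, hE1, hE2, hE3]
  rw [show (∑ i, 2 * effRes (G i)) = 2 * ∑ i, effRes (G i) by rw [Finset.mul_sum]]
  simp only [hrc]
  ring
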